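/- Let p and q be real numbers with 0 < p < 1/2 and 1 - p ≤ q ≤ 1. Then strategic signaling increases the false positive rate and decreases the false negative rate relative to revealing: FPR_s(p,q) ≥ FPR_r(p,q), and ((1 - 2·p)/(1-p))·FNR_r(p,q) ≤ FNR_s(p,q) ≤ FNR_r(p,q). -/
import Mathlib


/-- The revealing school's false positive rate. -/
noncomputable def FPR_r (p q : ℝ) : ℝ := 1 - q

/-- The revealing school's false negative rate. -/
noncomputable def FNR_r (p q : ℝ) : ℝ := 1 - q

/-- The strategic school's false positive rate. -/
noncomputable def FPR_s (p q : ℝ) : ℝ := 1 - q + q * (p + q - 1) / (q - p)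

/-- The strategic school's false negative rate. -/
noncomputable def FNR_s (p q : ℝ) : ℝ := (1 - q) * (1 - 2 * p) / (q - p)

/-- Strategic signaling increases the FPR and decreases the FNR relative to
revealing: FPR_s ≥ FPR_r and ((1-2p)/(1-p))·FNR_r ≤ FNR_s ≤ FNR_r. -/
theorem strategic_vs_revealing_rates (p q : ℝ) (hp0 : 0 < p) (hp : p < 1/2)
    (hq1 : 1 - p ≤ q) (hq2 : q ≤ 1) :
    FPR_s p q ≥ FPR_r p q ∧
    ((1 - 2 * p) / (1 - p)) * FNR_r p q ≤ FNR_s p q ∧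
    FNR_s p q ≤ FNR_r p q := by
  have hqp : 0 < q - p := by linarith
  have hp1 : 0 < 1 - p := by linarith
  unfold FPR_s FPR_r FNR_s FNR_r
  refine ⟨?_, ?_, ?_⟩
  · have : 0 ≤ q * (p + q - 1) / (q - p) := by
      apply div_nonneg _ hqp.le
      nlinarith
    linarith
  · rw [div_mul_eq_mul_div, div_le_div_iff₀ hp1 hqp]
    nlinarith [mul_nonneg (by linarith : (0:ℝ) ≤ 1 - q) (by linarith : (0:ℝ) ≤ 1 - 2 * p)]
  · rw [div_le_iff₀ hqp]
    nlinarith
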